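/- Assume (H1): for every transfinite sequence (X_ξ)_{ξ<ω₁} of block subspaces that is ⊆*-decreasing (i.e., X_ζ ⊆* X_ξ whenever ξ < ζ < ω₁) there is a block subspace Y with Y ⊆* X_ξ for all ξ < ω₁; and (H2): for every countable set D and every family (f_ξ)_{ξ<ω₁} of functions f_ξ : D → ℕ there is a function g : D → ℕ such that for each ξ < ω₁, f_ξ(d) ≤ g(d) for all but finitely many d ∈ D. Then the union of any family of ℵ₁ many strategically Ramsey subsets of E^∞ is strategically Ramsey. (Both (H1) and (H2) are consequences of Martin's Axiom MA_{ω₁}, under which the paper states this theorem.) -/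

import Mathlib

section Defs

variable {𝔽 : Type} [Field 𝔽] {E : Type} [AddCommGroup E] [Module 𝔽 E]

/-- The support of a vector with respect to the basis `b`. -/
noncomputable def supp (b : Module.Basis ℕ 𝔽 E) (x : E) : Finset ℕ :=
  (b.repr x).support

/-- `VecLt b x y` means `x < y`: every element of the support of `x` is smaller than
every element of the support of `y`. -/
def VecLt (b : Module.Basis ℕ 𝔽 E) (x y : E) : Prop :=
  ∀ m ∈ supp b x, ∀ n ∈ supp b y, m < n

/-- `NatLt b k x` means `k < x`: `k` is smaller than every element of the support of `x`. -/
def NatLt (b : Module.Basis ℕ 𝔽 E) (k : ℕ) (x : E) : Prop :=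
  ∀ n ∈ supp b x, k < n

/-- An infinite block sequence: a sequence of nonzero vectors with `x n < x (n + 1)`. -/
def IsBlockSeq (b : Module.Basis ℕ 𝔽 E) (x : ℕ → E) : Prop :=
  (∀ n, x n ≠ 0) ∧ ∀ n, VecLt b (x n) (x (n + 1))

/-- A finite block sequence: a list of nonzero vectors, consecutively increasing in the
block ordering. -/
def IsFinBlockSeq (b : Module.Basis ℕ 𝔽 E) (l : List E) : Prop :=
  (∀ x ∈ l, x ≠ 0) ∧ l.Chain' (VecLt b)

/-- A block subspace: a subspace spanned by an infinite block sequence. -/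
def IsBlockSubspace (b : Module.Basis ℕ 𝔽 E) (X : Submodule 𝔽 E) : Prop :=
  ∃ y : ℕ → E, IsBlockSeq b y ∧ X = Submodule.span 𝔽 (Set.range y)

/-- The list of the first `n` values of a sequence. -/
def hist {α : Type _} (x : ℕ → α) (n : ℕ) : List α :=
  List.ofFn (fun j : Fin n => x j)

/-- The concatenation of a finite prefix with an infinite sequence. -/
def prefCat {α : Type _} (l : List α) (x : ℕ → α) : ℕ → α := fun n =>
  if h : n < l.length then l.get ⟨n, h⟩ else x (n - l.length)

/-- Player II has a strategy in Gowers' game `G_X(pre)` below `X` to play in `A`: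
player I plays infinite-dimensional subspaces `Y i ≤ X`, player II answers with a
nonzero vector of `Y i`, the vectors played by II forming a block sequence, and the
outcome (the prefix `pre` followed by II's vectors) lies in `A`. -/
def IIWinsG (b : Module.Basis ℕ 𝔽 E) (X : Submodule 𝔽 E) (pre : List E) (A : Set (ℕ → E)) :
    Prop :=
  ∃ σ : List (Submodule 𝔽 E) → E,
    ∀ Y : ℕ → Submodule 𝔽 E,
      (∀ i, Y i ≤ X ∧ ¬FiniteDimensional 𝔽 ↥(Y i)) →
      (∀ i, σ (hist Y (i + 1)) ∈ Y i ∧ σ (hist Y (i + 1)) ≠ 0 ∧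
          VecLt b (σ (hist Y (i + 1))) (σ (hist Y (i + 2)))) ∧
        prefCat pre (fun i => σ (hist Y (i + 1))) ∈ A

/-- Player I has a strategy in the infinite asymptotic game `F_X(pre)` below `X` to play
in `A`: player I plays strictly increasing natural numbers `n i`, player II answers with
nonzero vectors of `X` with `n i < x i` forming a block sequence, and the outcome
(the prefix `pre` followed by II's vectors) lies in `A`. -/
def IWinsF (b : Module.Basis ℕ 𝔽 E) (X : Submodule 𝔽 E) (pre : List E) (A : Set (ℕ → E)) :
    Prop :=
  ∃ σ : List E → ℕ,
    ∀ x : ℕ → E,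
      (∀ i, x i ∈ X ∧ x i ≠ 0 ∧ NatLt b (σ (hist x i)) (x i) ∧
          VecLt b (x i) (x (i + 1))) →
      (∀ i, σ (hist x i) < σ (hist x (i + 1))) ∧ prefCat pre x ∈ A

/-- A set `A ⊆ E^∞` is strategically Ramsey if for every block subspace `V` and every
finite block sequence `z`, there is a block subspace `W ≤ V` such that either II has a
strategy in `G_W(z)` to play in `A`, or I has a strategy in `F_W(z)` to play in `Aᶜ`. -/
def StrategicallyRamsey (b : Module.Basis ℕ 𝔽 E) (A : Set (ℕ → E)) : Prop :=
  ∀ V : Submodule 𝔽 E, IsBlockSubspace b V → ∀ z : List E, IsFinBlockSeq b z →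
    ∃ W : Submodule 𝔽 E, W ≤ V ∧ IsBlockSubspace b W ∧
      (IIWinsG b W z A ∨ IWinsF b W z Aᶜ)

/-- `Y ⊆* X`: `Y` is spanned by an infinite block sequence all but finitely many of
whose terms belong to `X`. -/
def SubsetStar (b : Module.Basis ℕ 𝔽 E) (Y X : Submodule 𝔽 E) : Prop :=
  ∃ y : ℕ → E, IsBlockSeq b y ∧ Y = Submodule.span 𝔽 (Set.range y) ∧
    ∃ N : ℕ, ∀ m, N ≤ m → y m ∈ X

end Defs

section ProofA
variable {α : Type _}

lemma hist_length (x : ℕ → α) (n : ℕ) : (hist x n).length = n := by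
  simp [hist]

lemma hist_zero (x : ℕ → α) : hist x 0 = [] := rfl

lemma hist_add (x : ℕ → α) (m k : ℕ) :
    hist x (m + k) = hist x m ++ hist (fun j => x (m + j)) k := by
  simp only [hist]
  rw [List.ofFn_add]
  congr 1

lemma hist_succ (x : ℕ → α) (n : ℕ) : hist x (n + 1) = hist x n ++ [x n] := by
  rw [hist_add]
  simp [hist]

lemma hist_take (x : ℕ → α) (m k : ℕ) :
    (hist x (m + k)).take m = hist x m := by
  rw [hist_add]
  have := List.take_left (l₁ := hist x m) (l₂ := hist (fun j => x (m + j)) k)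
  rwa [hist_length] at this

lemma hist_drop (x : ℕ → α) (m k : ℕ) :
    (hist x (m + k)).drop m = hist (fun j => x (m + j)) k := by
  rw [hist_add]
  have := List.drop_left (l₁ := hist x m) (l₂ := hist (fun j => x (m + j)) k)
  rwa [hist_length] at this

lemma hist_cons (Y : ℕ → α) (i : ℕ) :
    hist Y (i + 1) = Y 0 :: hist (fun j => Y (j + 1)) i := by
  simp only [hist]
  rw [show i + 1 = Nat.succ i from rfl, List.ofFn_succ]
  congr 1

lemma prefCat_lt (l : List α) (x : ℕ → α) (n : ℕ) (h : n < l.length) :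
    prefCat l x n = l.get ⟨n, h⟩ := by
  simp [prefCat, h]

lemma prefCat_ge (l : List α) (x : ℕ → α) (n : ℕ) (h : l.length ≤ n) :
    prefCat l x n = x (n - l.length) := by
  simp [prefCat, Nat.not_lt.2 h]

/-- cons of a vector onto a sequence -/
def consSeq (v : α) (u : ℕ → α) : ℕ → α := fun n =>
  match n with
  | 0 => v
  | (j + 1) => u j

lemma prefCat_snoc (l : List α) (v : α) (u : ℕ → α) :
    prefCat (l ++ [v]) u = prefCat l (consSeq v u) := by
  funext n
  rcases lt_trichotomy n l.length with h | h | h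
  · rw [prefCat_lt l _ n h, prefCat_lt _ _ n (by simp; omega)]
    simp only [List.get_eq_getElem]
    exact List.getElem_append_left h
  · subst h
    rw [prefCat_ge l _ _ le_rfl]
    rw [prefCat_lt _ _ _ (by simp)]
    simp only [List.get_eq_getElem, consSeq, Nat.sub_self]
    rw [List.getElem_append_right le_rfl]
    simp
  · rw [prefCat_ge l _ n h.le, prefCat_ge _ _ n (by simp; omega)]
    have : n - l.length = (n - (l.length + 1)) + 1 := by omega
    rw [this]
    simp [consSeq]

lemma prefCat_append_hist (pre : List α) (x : ℕ → α) (N : ℕ) :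
    prefCat (pre ++ hist x N) (fun j => x (N + j)) = prefCat pre x := by
  funext n
  rcases lt_trichotomy n pre.length with h | h | h
  · rw [prefCat_lt _ _ n (by simp [hist_length]; omega), prefCat_lt _ _ n h]
    simp only [List.get_eq_getElem]
    exact List.getElem_append_left h
  · subst h
    by_cases hN : 0 < N
    · rw [prefCat_lt _ _ _ (by simp [hist_length]; omega)]
      rw [prefCat_ge _ _ _ le_rfl]
      simp only [Nat.sub_self, List.get_eq_getElem]
      rw [List.getElem_append_right le_rfl]
      simp [hist, List.getElem_ofFn]
    · have hN0 : N = 0 := by omega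
      subst hN0
      rw [prefCat_ge _ _ _ (by simp [hist_length]), prefCat_ge _ _ _ le_rfl]
      simp
  · by_cases h2 : n < pre.length + N
    · rw [prefCat_lt _ _ n (by simp [hist_length]; omega), prefCat_ge _ _ n h.le]
      simp only [List.get_eq_getElem]
      rw [List.getElem_append_right (by omega)]
      simp only [hist, List.getElem_ofFn]
    · rw [prefCat_ge _ _ n (by simp [hist_length]; omega), prefCat_ge _ _ n h.le]
      simp only [List.length_append, hist_length]
      congr 1
      omega

end ProofA
section ProofB
variable {𝔽 : Type} [Field 𝔽] {E : Type} [AddCommGroup E] [Module 𝔽 E]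

lemma supp_zero (b : Module.Basis ℕ 𝔽 E) : supp b (0 : E) = ∅ := by
  simp [supp]

lemma supp_nonempty (b : Module.Basis ℕ 𝔽 E) {x : E} (hx : x ≠ 0) : (supp b x).Nonempty := by
  rw [supp, Finsupp.support_nonempty_iff]
  simpa using hx

lemma mem_supp_iff (b : Module.Basis ℕ 𝔽 E) {x : E} {n : ℕ} :
    n ∈ supp b x ↔ b.repr x n ≠ 0 := Finsupp.mem_support_iff

lemma supp_smul_subset (b : Module.Basis ℕ 𝔽 E) (c : 𝔽) (x : E) :
    supp b (c • x) ⊆ supp b x := by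
  intro n hn
  rw [mem_supp_iff] at hn ⊢
  rw [map_smul, Finsupp.smul_apply] at hn
  intro h
  simp [h] at hn

lemma supp_add_subset (b : Module.Basis ℕ 𝔽 E) (x y : E) :
    supp b (x + y) ⊆ supp b x ∪ supp b y := by
  intro n hn
  rw [mem_supp_iff] at hn
  rw [map_add, Finsupp.add_apply] at hn
  rw [Finset.mem_union, mem_supp_iff, mem_supp_iff]
  by_contra h
  push_neg at h
  rw [h.1, h.2, add_zero] at hn
  exact hn rfl

/-- the maximum of the support -/
noncomputable def MS (b : Module.Basis ℕ 𝔽 E) (x : E) : ℕ := (supp b x).sup id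

lemma le_MS (b : Module.Basis ℕ 𝔽 E) {x : E} {a : ℕ} (h : a ∈ supp b x) : a ≤ MS b x :=
  Finset.le_sup (f := id) h

lemma natLt_mono (b : Module.Basis ℕ 𝔽 E) {k m : ℕ} {x : E} (h : k ≤ m) (hm : NatLt b m x) :
    NatLt b k x := fun n hn => lt_of_le_of_lt h (hm n hn)

lemma vecLt_of_natLt_MS (b : Module.Basis ℕ 𝔽 E) {x y : E} (h : NatLt b (MS b x) y) :
    VecLt b x y := fun m hm n hn => lt_of_le_of_lt (le_MS b hm) (h n hn)

lemma natLt_of_vecLt (b : Module.Basis ℕ 𝔽 E) {k : ℕ} {x y : E} (hx : x ≠ 0)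
    (hk : NatLt b k x) (hxy : VecLt b x y) : NatLt b k y := by
  obtain ⟨m, hm⟩ := supp_nonempty b hx
  exact fun n hn => lt_trans (hk m hm) (hxy m hm n hn)

lemma vecLt_trans (b : Module.Basis ℕ 𝔽 E) {x y z : E} (hy : y ≠ 0)
    (h1 : VecLt b x y) (h2 : VecLt b y z) : VecLt b x z := by
  obtain ⟨m, hm⟩ := supp_nonempty b hy
  exact fun a ha c hc => lt_trans (h1 a ha m hm) (h2 m hm c hc)

lemma blockSeq_lt (b : Module.Basis ℕ 𝔽 E) {y : ℕ → E} (hy : IsBlockSeq b y) {m n : ℕ}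
    (h : m < n) : VecLt b (y m) (y n) := by
  induction n with
  | zero => omega
  | succ n ih =>
    rcases Nat.lt_succ_iff_lt_or_eq.1 h with h' | h'
    · exact vecLt_trans b (hy.1 n) (ih h') (hy.2 n)
    · subst h'; exact hy.2 m

/-- The submodule of vectors all of whose support lies above `t`. -/
def hi (b : Module.Basis ℕ 𝔽 E) (t : ℕ) : Submodule 𝔽 E where
  carrier := {v | NatLt b t v}
  zero_mem' := by intro n hn; rw [supp_zero] at hn; exact absurd hn (Finset.notMem_empty n)
  add_mem' := by
    intro x y hx hy n hn
    rcases Finset.mem_union.1 (supp_add_subset b x y hn) with h | h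
    · exact hx n h
    · exact hy n h
  smul_mem' := by
    intro c x hx n hn
    exact hx n (supp_smul_subset b c x hn)

lemma mem_hi_iff (b : Module.Basis ℕ 𝔽 E) {t : ℕ} {v : E} : v ∈ hi b t ↔ NatLt b t v := Iff.rfl

/-- membership in the span of a tail, given that the support avoids the head blocks -/
lemma tailMem (b : Module.Basis ℕ 𝔽 E) {y : ℕ → E} (hy : IsBlockSeq b y) {x : E}
    (hx : x ∈ Submodule.span 𝔽 (Set.range y)) (N : ℕ)
    (hlt : ∀ m < N, VecLt b (y m) x) :
    x ∈ Submodule.span 𝔽 (Set.range fun i => y (N + i)) := by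
  obtain ⟨c, hc⟩ := Finsupp.mem_span_range_iff_exists_finsupp.1 hx
  have hczero : ∀ m < N, c m = 0 := by
    intro m hm
    by_contra hcm
    obtain ⟨n₀, hn₀⟩ := supp_nonempty b (hy.1 m)
    have hrepr : b.repr x n₀ = (c m • b.repr (y m)) n₀ := by
      rw [← hc]
      have : b.repr (c.sum fun i a => a • y i) = c.sum fun i a => a • b.repr (y i) := by
        rw [map_finsuppSum]
        congr 1
        funext i a
        rw [map_smul]
      rw [this, Finsupp.sum_apply]
      apply Finsupp.sum_eq_single
      · intro i hci him
        rw [Finsupp.smul_apply]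
        have : n₀ ∉ supp b (y i) := by
          intro hmem
          rcases lt_or_gt_of_ne him with h' | h'
          · exact lt_irrefl n₀ (blockSeq_lt b hy h' n₀ hmem n₀ hn₀)
          · exact lt_irrefl n₀ (blockSeq_lt b hy h' n₀ hn₀ n₀ hmem)
        rw [mem_supp_iff] at this
        push_neg at this
        rw [this, smul_zero]
      · intro _
        simp
    have : n₀ ∈ supp b x := by
      rw [mem_supp_iff, hrepr, Finsupp.smul_apply, smul_eq_mul]
      exact mul_ne_zero hcm (mem_supp_iff b |>.1 hn₀)
    exact lt_irrefl n₀ (hlt m hm n₀ hn₀ n₀ this)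
  rw [← hc, Finsupp.sum]
  apply Submodule.sum_mem
  intro i hi
  have hNi : N ≤ i := by
    by_contra h
    exact (Finsupp.mem_support_iff.1 hi) (hczero i (by omega))
  apply Submodule.smul_mem
  apply Submodule.subset_span
  exact ⟨i - N, by simp only []; rw [Nat.add_sub_cancel' hNi]⟩

lemma supp_subset_of_mem_span_finset (b : Module.Basis ℕ 𝔽 E) (s : Finset E) {x : E}
    (hx : x ∈ Submodule.span 𝔽 (s : Set E)) : supp b x ⊆ s.biUnion (supp b) := by
  induction hx using Submodule.span_induction with
  | mem v hv => exact fun n hn => Finset.mem_biUnion.2 ⟨v, hv, hn⟩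
  | zero => rw [supp_zero]; exact Finset.empty_subset _
  | add u v _ _ hu hv =>
    exact fun n hn => by
      rcases Finset.mem_union.1 (supp_add_subset b u v hn) with h | h
      · exact hu h
      · exact hv h
  | smul c v _ hv => exact fun n hn => hv (supp_smul_subset b c v hn)

/-- A subspace is deep if it contains nonzero vectors supported arbitrarily high. -/
def Deep (b : Module.Basis ℕ 𝔽 E) (Z : Submodule 𝔽 E) : Prop :=
  ∀ n, ∃ v, v ∈ Z ∧ v ≠ 0 ∧ NatLt b n v

lemma not_fd_of_deep (b : Module.Basis ℕ 𝔽 E) {Z : Submodule 𝔽 E} (hZ : Deep b Z) :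
    ¬FiniteDimensional 𝔽 ↥Z := by
  intro hfd
  have hfg : Z.FG := Module.Finite.iff_fg.1 hfd
  obtain ⟨s, hs⟩ := hfg
  set B : Finset ℕ := s.biUnion (supp b) with hB
  obtain ⟨v, hvZ, hv0, hvlt⟩ := hZ (B.sup id)
  obtain ⟨a, ha⟩ := supp_nonempty b hv0
  have havB : a ∈ B := by
    apply supp_subset_of_mem_span_finset b s _ ha
    rw [hs]; exact hvZ
  exact absurd (hvlt a ha) (not_lt.2 (Finset.le_sup (f := id) havB))

lemma deep_of_not_fd (b : Module.Basis ℕ 𝔽 E) {Z : Submodule 𝔽 E}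
    (hZ : ¬FiniteDimensional 𝔽 ↥Z) : Deep b Z := by
  intro n
  set f : E →ₗ[𝔽] (Fin (n + 1) → 𝔽) :=
    LinearMap.pi (fun i => (Finsupp.lapply (i : ℕ)).comp (b.repr : E →ₗ[𝔽] (ℕ →₀ 𝔽))) with hf
  have hne : Z ⊓ LinearMap.ker f ≠ ⊥ := by
    intro hbot
    apply hZ
    apply Module.Finite.iff_fg.2
    apply Submodule.fg_of_fg_map_of_fg_inf_ker f
    · exact IsNoetherian.noetherian _
    · rw [hbot]; exact Submodule.fg_bot
  obtain ⟨v, hv, hv0⟩ := (Submodule.ne_bot_iff _).1 hne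
  refine ⟨v, hv.1, hv0, ?_⟩
  intro m hm
  by_contra hlt
  push_neg at hlt
  have : f v ⟨m, by omega⟩ = 0 := by rw [LinearMap.mem_ker.1 hv.2]; rfl
  have : b.repr v m = 0 := this
  exact (mem_supp_iff b |>.1 hm) this

lemma deep_of_block (b : Module.Basis ℕ 𝔽 E) {X : Submodule 𝔽 E}
    (hX : IsBlockSubspace b X) : Deep b X := by
  obtain ⟨y, hy, rfl⟩ := hX
  intro n
  refine ⟨y (n + 1), Submodule.subset_span ⟨n + 1, rfl⟩, hy.1 _, ?_⟩
  have mins : ∀ m, ∀ a ∈ supp b (y m), m ≤ a := by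
    intro m
    induction m with
    | zero => intro a _; omega
    | succ m ih =>
      intro a ha
      obtain ⟨c, hc⟩ := supp_nonempty b (hy.1 m)
      exact lt_of_le_of_lt (ih c hc) (hy.2 m c hc a ha)
  intro a ha
  exact lt_of_lt_of_le (by omega) (mins (n + 1) a ha)

lemma exists_blockseq_in_deep (b : Module.Basis ℕ 𝔽 E) {Z : Submodule 𝔽 E} (hZ : Deep b Z)
    (k : ℕ) : ∃ y : ℕ → E, IsBlockSeq b y ∧ (∀ i, y i ∈ Z) ∧ NatLt b k (y 0) := by
  classical
  choose f hf1 hf2 hf3 using hZ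
  set y : ℕ → E := fun i => Nat.rec (f k) (fun _ prev => f (MS b prev)) i with hy
  have h0 : y 0 = f k := rfl
  have hsucc : ∀ i, y (i + 1) = f (MS b (y i)) := fun i => rfl
  refine ⟨y, ⟨fun i => ?_, fun i => ?_⟩, fun i => ?_, ?_⟩
  · cases i with
    | zero => rw [h0]; exact hf2 k
    | succ i => rw [hsucc]; exact hf2 _
  · rw [hsucc]
    exact vecLt_of_natLt_MS b (hf3 _)
  · cases i with
    | zero => rw [h0]; exact hf1 k
    | succ i => rw [hsucc]; exact hf1 _
  · rw [h0]; exact hf3 k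

lemma exists_block_le_of_deep (b : Module.Basis ℕ 𝔽 E) {Z : Submodule 𝔽 E} (hZ : Deep b Z) :
    ∃ Y : Submodule 𝔽 E, IsBlockSubspace b Y ∧ Y ≤ Z := by
  obtain ⟨y, hy, hyZ, -⟩ := exists_blockseq_in_deep b hZ 0
  refine ⟨Submodule.span 𝔽 (Set.range y), ⟨y, hy, rfl⟩, ?_⟩
  rw [Submodule.span_le]
  rintro v ⟨i, rfl⟩
  exact hyZ i

end ProofB
section ProofC
variable {𝔽 : Type} [Field 𝔽] {E : Type} [AddCommGroup E] [Module 𝔽 E]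

lemma blockSeq_supp_ge (b : Module.Basis ℕ 𝔽 E) {y : ℕ → E} (hy : IsBlockSeq b y) :
    ∀ m, ∀ a ∈ supp b (y m), m ≤ a := by
  intro m
  induction m with
  | zero => intro a _; omega
  | succ m ih =>
    intro a ha
    obtain ⟨c, hc⟩ := supp_nonempty b (hy.1 m)
    exact lt_of_le_of_lt (ih c hc) (hy.2 m c hc a ha)

lemma blockSeq_tail (b : Module.Basis ℕ 𝔽 E) {y : ℕ → E} (hy : IsBlockSeq b y) (N : ℕ) :
    IsBlockSeq b (fun i => y (N + i)) := by
  constructor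
  · intro n; exact hy.1 _
  · intro n
    have : N + (n + 1) = (N + n) + 1 := by omega
    simp only [this]
    exact hy.2 (N + n)

lemma sstar_block (b : Module.Basis ℕ 𝔽 E) {Y X : Submodule 𝔽 E} (h : SubsetStar b Y X) :
    IsBlockSubspace b Y := by
  obtain ⟨y, hy, hspan, -⟩ := h
  exact ⟨y, hy, hspan⟩

lemma sstar_of_le (b : Module.Basis ℕ 𝔽 E) {Y X : Submodule 𝔽 E} (hY : IsBlockSubspace b Y)
    (h : Y ≤ X) : SubsetStar b Y X := by
  obtain ⟨y, hy, hspan⟩ := hY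
  exact ⟨y, hy, hspan, 0, fun m _ => h (hspan ▸ Submodule.subset_span ⟨m, rfl⟩)⟩

lemma sstar_refl (b : Module.Basis ℕ 𝔽 E) {X : Submodule 𝔽 E} (hX : IsBlockSubspace b X) :
    SubsetStar b X X := sstar_of_le b hX le_rfl

lemma sstar_mono_right (b : Module.Basis ℕ 𝔽 E) {Y X X' : Submodule 𝔽 E}
    (h : SubsetStar b Y X) (hXX' : X ≤ X') : SubsetStar b Y X' := by
  obtain ⟨y, hy, hspan, N, hN⟩ := h
  exact ⟨y, hy, hspan, N, fun m hm => hXX' (hN m hm)⟩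

/-- threshold lemma: elements of `Y` supported beyond the threshold lie in `X`. -/
lemma mem_of_sstar (b : Module.Basis ℕ 𝔽 E) {Y X : Submodule 𝔽 E} (h : SubsetStar b Y X) :
    ∃ t : ℕ, ∀ v ∈ Y, NatLt b t v → v ∈ X := by
  obtain ⟨y, hy, hspan, N, hN⟩ := h
  refine ⟨if N = 0 then 0 else MS b (y (N - 1)), fun v hv hvt => ?_⟩
  have hvtail : v ∈ Submodule.span 𝔽 (Set.range fun i => y (N + i)) := by
    apply tailMem b hy (hspan ▸ hv)
    intro m hm
    intro a ha n hn
    have haMS : a ≤ MS b (y (N - 1)) := by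
      rcases Nat.lt_or_ge m (N - 1) with h' | h'
      · obtain ⟨c, hc⟩ := supp_nonempty b (hy.1 (N - 1))
        exact le_of_lt (lt_of_lt_of_le (blockSeq_lt b hy h' a ha c hc) (le_MS b hc))
      · have : m = N - 1 := by omega
        subst this
        exact le_MS b ha
    have : (if N = 0 then 0 else MS b (y (N - 1))) = MS b (y (N - 1)) := by
      have : N ≠ 0 := by omega
      simp [this]
    exact lt_of_le_of_lt haMS (by rw [← this]; exact hvt n hn)
  revert hvtail
  generalize hQ : Submodule.span 𝔽 (Set.range fun i => y (N + i)) = Q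
  intro hvtail
  have : Q ≤ X := by
    rw [← hQ, Submodule.span_le]
    rintro w ⟨i, rfl⟩
    exact hN (N + i) (by omega)
  exact this hvtail

lemma sstar_trans (b : Module.Basis ℕ 𝔽 E) {Y X Z : Submodule 𝔽 E}
    (h1 : SubsetStar b Y X) (h2 : SubsetStar b X Z) : SubsetStar b Y Z := by
  obtain ⟨t, ht⟩ := mem_of_sstar b h2
  obtain ⟨y, hy, hspan, N, hN⟩ := h1
  refine ⟨y, hy, hspan, max N (t + 1), fun m hm => ?_⟩
  apply ht _ (hN m (le_trans (le_max_left _ _) hm))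
  intro a ha
  exact lt_of_lt_of_le (by omega : t < max N (t + 1)) (le_trans hm (blockSeq_supp_ge b hy m a ha))

lemma exists_tail_le (b : Module.Basis ℕ 𝔽 E) {Y X : Submodule 𝔽 E} (h : SubsetStar b Y X) :
    ∃ W : Submodule 𝔽 E, IsBlockSubspace b W ∧ W ≤ X ∧ W ≤ Y ∧ SubsetStar b W Y := by
  obtain ⟨y, hy, hspan, N, hN⟩ := h
  set W : Submodule 𝔽 E := Submodule.span 𝔽 (Set.range fun i => y (N + i)) with hW
  have hWb : IsBlockSubspace b W := ⟨_, blockSeq_tail b hy N, rfl⟩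
  have hWX : W ≤ X := by
    rw [hW, Submodule.span_le]
    rintro w ⟨i, rfl⟩
    exact hN (N + i) (by omega)
  have hWY : W ≤ Y := by
    rw [hW, Submodule.span_le]
    rintro w ⟨i, rfl⟩
    exact hspan ▸ Submodule.subset_span ⟨N + i, rfl⟩
  exact ⟨W, hWb, hWX, hWY, sstar_of_le b hWb hWY⟩

end ProofC
section ProofD
variable {𝔽 : Type} [Field 𝔽] {E : Type} [AddCommGroup E] [Module 𝔽 E]

/-- Strengthened Gowers game for II: all moves are supported above `K`. -/
def IIWinsGK (b : Module.Basis ℕ 𝔽 E) (X : Submodule 𝔽 E) (pre : List E) (A : Set (ℕ → E))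
    (K : ℕ) : Prop :=
  ∃ σ : List (Submodule 𝔽 E) → E,
    ∀ Y : ℕ → Submodule 𝔽 E,
      (∀ i, Y i ≤ X ∧ ¬FiniteDimensional 𝔽 ↥(Y i)) →
      (∀ i, σ (hist Y (i + 1)) ∈ Y i ∧ σ (hist Y (i + 1)) ≠ 0 ∧
          VecLt b (σ (hist Y (i + 1))) (σ (hist Y (i + 2))) ∧
          NatLt b K (σ (hist Y (i + 1)))) ∧
        prefCat pre (fun i => σ (hist Y (i + 1))) ∈ A

lemma IIWinsG_of_GK {b : Module.Basis ℕ 𝔽 E} {X : Submodule 𝔽 E} {pre : List E}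
    {A : Set (ℕ → E)} {K : ℕ} (h : IIWinsGK b X pre A K) : IIWinsG b X pre A := by
  obtain ⟨σ, hσ⟩ := h
  refine ⟨σ, fun Y hY => ?_⟩
  obtain ⟨h1, h2⟩ := hσ Y hY
  exact ⟨fun i => ⟨(h1 i).1, (h1 i).2.1, (h1 i).2.2.1⟩, h2⟩

lemma IIWinsG_mono {b : Module.Basis ℕ 𝔽 E} {X : Submodule 𝔽 E} {pre : List E}
    {A A' : Set (ℕ → E)} (hAA' : A ⊆ A') (h : IIWinsG b X pre A) :
    IIWinsG b X pre A' := by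
  obtain ⟨σ, hσ⟩ := h
  exact ⟨σ, fun Y hY => ⟨(hσ Y hY).1, hAA' (hσ Y hY).2⟩⟩

lemma hist_map {α β : Type _} (g : α → β) (Y : ℕ → α) (n : ℕ) :
    hist (fun i => g (Y i)) n = (hist Y n).map g := by
  simp only [hist]
  exact (List.map_ofFn (g := g)).symm

/-- transfer of II's winning strategies down `⊆*`, with pushed supports. -/
lemma IIWinsG_transfer (b : Module.Basis ℕ 𝔽 E) {X Y : Submodule 𝔽 E} {pre : List E}
    {A : Set (ℕ → E)} (h : IIWinsG b X pre A) (hYX : SubsetStar b Y X) (K : ℕ) :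
    IIWinsGK b Y pre A K := by
  classical
  obtain ⟨σ, hσ⟩ := h
  obtain ⟨t, ht⟩ := mem_of_sstar b hYX
  set s : ℕ := max t K with hs
  set φ : Submodule 𝔽 E → Submodule 𝔽 E := fun Z => Z ⊓ hi b s with hφ
  refine ⟨fun l => σ (l.map φ), fun Yseq hYseq => ?_⟩
  set Yseq' : ℕ → Submodule 𝔽 E := fun i => φ (Yseq i) with hYseq'
  have hmapped : ∀ n, (hist Yseq n).map φ = hist Yseq' n := fun n =>
    (hist_map φ Yseq n).symm
  have hvalid : ∀ i, Yseq' i ≤ X ∧ ¬FiniteDimensional 𝔽 ↥(Yseq' i) := by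
    intro i
    constructor
    · intro v hv
      exact ht v ((hYseq i).1 hv.1) (natLt_mono b (le_max_left _ _) hv.2)
    · apply not_fd_of_deep b
      intro n
      obtain ⟨v, hv1, hv2, hv3⟩ := deep_of_not_fd b (hYseq i).2 (max n s)
      exact ⟨v, ⟨hv1, natLt_mono b (le_max_right _ _) hv3⟩, hv2,
        natLt_mono b (le_max_left _ _) hv3⟩
  obtain ⟨h1, h2⟩ := hσ Yseq' hvalid
  constructor
  · intro i
    show σ ((hist Yseq (i + 1)).map φ) ∈ Yseq i ∧ σ ((hist Yseq (i + 1)).map φ) ≠ 0 ∧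
      VecLt b (σ ((hist Yseq (i + 1)).map φ)) (σ ((hist Yseq (i + 2)).map φ)) ∧
      NatLt b K (σ ((hist Yseq (i + 1)).map φ))
    rw [hmapped, hmapped]
    have hin := (h1 i).1
    refine ⟨hin.1, (h1 i).2.1, (h1 i).2.2, ?_⟩
    exact natLt_mono b (le_max_right t K) hin.2
  · have : (fun i => σ ((hist Yseq (i + 1)).map φ)) = fun i => σ (hist Yseq' (i + 1)) := by
      funext i; rw [hmapped]
    rw [this]
    exact h2

lemma max_lt_max2 {a b c d : ℕ} (h1 : a < b) (h2 : c < d) : max a c < max b d :=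
  max_lt (lt_of_lt_of_le h1 (le_max_left _ _)) (lt_of_lt_of_le h2 (le_max_right _ _))

/-- transfer of I's winning strategies down `⊆*`. -/
lemma IWinsF_transfer (b : Module.Basis ℕ 𝔽 E) {X Y : Submodule 𝔽 E} {pre : List E}
    {A : Set (ℕ → E)} (h : IWinsF b X pre A) (hYX : SubsetStar b Y X) :
    IWinsF b Y pre A := by
  obtain ⟨σ, hσ⟩ := h
  obtain ⟨t, ht⟩ := mem_of_sstar b hYX
  refine ⟨fun l => max (σ l) (t + l.length + 1), fun x hx => ?_⟩
  have hvalid : ∀ i, x i ∈ X ∧ x i ≠ 0 ∧ NatLt b (σ (hist x i)) (x i) ∧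
      VecLt b (x i) (x (i + 1)) := by
    intro i
    obtain ⟨hx1, hx2, hx3, hx4⟩ := hx i
    refine ⟨?_, hx2, ?_, hx4⟩
    · apply ht _ hx1
      apply natLt_mono b (le_trans (by omega : t ≤ t + (hist x i).length + 1)
        (le_max_right _ _)) hx3
    · exact natLt_mono b (le_max_left _ _) hx3
  obtain ⟨hinc, hout⟩ := hσ x hvalid
  refine ⟨fun i => ?_, hout⟩
  apply max_lt_max2 (hinc i)
  simp only [hist_length]
  omega

lemma hist_ne_nil {α : Type _} (x : ℕ → α) (i : ℕ) : (hist x (i + 1)).isEmpty = false := by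
  rw [hist_succ]
  simp

/-- one-step composition for II's strategies in the Gowers game. -/
lemma IIWinsG_compose (b : Module.Basis ℕ 𝔽 E) {Z : Submodule 𝔽 E} {P : List E}
    {A : Set (ℕ → E)}
    (hstep : ∀ Y₁ : Submodule 𝔽 E, Y₁ ≤ Z → ¬FiniteDimensional 𝔽 ↥Y₁ →
      ∃ v : E, v ∈ Y₁ ∧ v ≠ 0 ∧ IIWinsGK b Z (P ++ [v]) A (MS b v)) :
    IIWinsG b Z P A := by
  classical
  have hstep' : ∀ Y₁ : Submodule 𝔽 E,
      ∃ v : E, ∃ τ : List (Submodule 𝔽 E) → E,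
        (Y₁ ≤ Z → ¬FiniteDimensional 𝔽 ↥Y₁ →
          v ∈ Y₁ ∧ v ≠ 0 ∧
          (∀ Yseq : ℕ → Submodule 𝔽 E,
            (∀ i, Yseq i ≤ Z ∧ ¬FiniteDimensional 𝔽 ↥(Yseq i)) →
            (∀ i, τ (hist Yseq (i + 1)) ∈ Yseq i ∧ τ (hist Yseq (i + 1)) ≠ 0 ∧
                VecLt b (τ (hist Yseq (i + 1))) (τ (hist Yseq (i + 2))) ∧
                NatLt b (MS b v) (τ (hist Yseq (i + 1)))) ∧
              prefCat (P ++ [v]) (fun i => τ (hist Yseq (i + 1))) ∈ A)) := by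
    intro Y₁
    by_cases h : Y₁ ≤ Z ∧ ¬FiniteDimensional 𝔽 ↥Y₁
    · obtain ⟨v, hv1, hv2, τ, hτ⟩ := hstep Y₁ h.1 h.2
      exact ⟨v, τ, fun _ _ => ⟨hv1, hv2, hτ⟩⟩
    · exact ⟨0, fun _ => 0, fun h1 h2 => absurd ⟨h1, h2⟩ h⟩
  choose vf τf hvτ using hstep'
  set σ : List (Submodule 𝔽 E) → E := fun l =>
    match l with
    | [] => 0
    | (Y₁ :: rest) => if rest.isEmpty then vf Y₁ else τf Y₁ rest with hσdef
  refine ⟨σ, fun Y hY => ?_⟩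
  set Yp : ℕ → Submodule 𝔽 E := fun j => Y (j + 1) with hYp
  have hYpvalid : ∀ i, Yp i ≤ Z ∧ ¬FiniteDimensional 𝔽 ↥(Yp i) := fun i => hY (i + 1)
  obtain ⟨hv1, hv2, hτ⟩ := hvτ (Y 0) (hY 0).1 (hY 0).2
  obtain ⟨hτ1, hτ2⟩ := hτ Yp hYpvalid
  have hm0 : σ (hist Y 1) = vf (Y 0) := by
    rw [hist_cons]
    simp only [hσdef, hist_zero]
    rfl
  have hmsucc : ∀ i, σ (hist Y (i + 2)) = τf (Y 0) (hist Yp (i + 1)) := by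
    intro i
    rw [show i + 2 = (i + 1) + 1 from rfl, hist_cons]
    simp only [hσdef]
    rw [if_neg]
    rw [hist_ne_nil]
    simp
  constructor
  · intro i
    cases i with
    | zero =>
      rw [hm0, hmsucc 0]
      exact ⟨hv1, hv2, vecLt_of_natLt_MS b ((hτ1 0).2.2.2)⟩
    | succ i =>
      rw [hmsucc i, hmsucc (i + 1)]
      exact ⟨(hτ1 i).1, (hτ1 i).2.1, (hτ1 i).2.2.1⟩
  · have : (fun i => σ (hist Y (i + 1))) =
        consSeq (vf (Y 0)) (fun i => τf (Y 0) (hist Yp (i + 1))) := by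
      funext i
      cases i with
      | zero => rw [hm0]; rfl
      | succ i => rw [hmsucc i]; rfl
    rw [this, ← prefCat_snoc]
    exact hτ2

end ProofD
section ProofE
variable {𝔽 : Type} [Field 𝔽] {E : Type} [AddCommGroup E] [Module 𝔽 E]

lemma countable_of_basis (b : Module.Basis ℕ 𝔽 E) [Countable 𝔽] : Countable E := by
  have : Function.Injective (b.repr : E → (ℕ →₀ 𝔽)) := b.repr.injective
  exact Function.Injective.countable this

/-- diagonalization through a `⊆*`-decreasing chain of block subspaces -/
lemma chain_diag (b : Module.Basis ℕ 𝔽 E) {W : ℕ → Submodule 𝔽 E}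
    (hB : ∀ k, IsBlockSubspace b (W k)) (hC : ∀ k, SubsetStar b (W (k + 1)) (W k)) :
    ∃ Y : Submodule 𝔽 E, IsBlockSubspace b Y ∧ ∀ k, SubsetStar b Y (W k) := by
  classical
  choose t ht using fun k => mem_of_sstar b (hC k)
  set T : ℕ → ℕ := fun k => (Finset.range k).sup t with hT
  have hTle : ∀ j k, j < k → t j ≤ T k := fun j k hjk =>
    Finset.le_sup (Finset.mem_range.2 hjk)
  have desc : ∀ d k v, v ∈ W k → NatLt b (T k) v → v ∈ W (k - d) := by
    intro d
    induction d with
    | zero => intro k v hv _; simpa using hv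
    | succ d ih =>
      intro k v hv hvT
      rcases le_or_gt k (d + 1) with h | h
      · have : k - (d + 1) = k - d - 1 := by omega
        rcases le_or_gt k d with h2 | h2
        · have e : k - (d + 1) = k - d := by omega
          rw [e]; exact ih k v hv hvT
        · have e : k - d = 1 ∧ k - (d+1) = 0 ∨ k - d = 0 ∧ k - (d+1) = 0 := by omega
          rcases e with ⟨e1, e2⟩ | ⟨e1, e2⟩
          · rw [e2]
            have h0 := ih k v hv hvT
            rw [e1] at h0
            exact ht 0 v h0 (natLt_mono b (hTle 0 k (by omega)) hvT)
          · rw [e2, ← e1]; exact ih k v hv hvT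
      · have h0 := ih k v hv hvT
        have e : k - d = (k - (d + 1)) + 1 := by omega
        rw [e] at h0
        apply ht (k - (d + 1)) v h0
        exact natLt_mono b (hTle (k - (d + 1)) k (by omega)) hvT
  have hmem : ∀ k j v, j ≤ k → v ∈ W k → NatLt b (T k) v → v ∈ W j := by
    intro k j v hjk hv hvT
    have := desc (k - j) k v hv hvT
    rwa [Nat.sub_sub_self hjk] at this
  choose f hf1 hf2 hf3 using fun k => deep_of_block b (hB k)
  set d : ℕ → E := fun i =>
    Nat.rec (f 0 (T 0)) (fun k prev => f (k + 1) (max (MS b prev) (T (k + 1)))) i with hd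
  have hd0 : d 0 = f 0 (T 0) := rfl
  have hdsucc : ∀ k, d (k + 1) = f (k + 1) (max (MS b (d k)) (T (k + 1))) := fun k => rfl
  have hdW : ∀ k, d k ∈ W k := by
    intro k
    cases k with
    | zero => rw [hd0]; exact hf1 _ _
    | succ k => rw [hdsucc]; exact hf1 _ _
  have hdne : ∀ k, d k ≠ 0 := by
    intro k
    cases k with
    | zero => rw [hd0]; exact hf2 _ _
    | succ k => rw [hdsucc]; exact hf2 _ _
  have hdT : ∀ k, NatLt b (T k) (d k) := by
    intro k
    cases k with
    | zero => rw [hd0]; exact hf3 _ _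
    | succ k =>
      rw [hdsucc]
      exact natLt_mono b (le_max_right _ _) (hf3 _ _)
  have hdblock : IsBlockSeq b d := by
    refine ⟨hdne, fun k => ?_⟩
    rw [hdsucc]
    exact vecLt_of_natLt_MS b (natLt_mono b (le_max_left _ _) (hf3 _ _))
  refine ⟨Submodule.span 𝔽 (Set.range d), ⟨d, hdblock, rfl⟩, fun j => ?_⟩
  exact ⟨d, hdblock, rfl, j, fun m hm => hmem m j (d m) hm (hdW m) (hdT m)⟩

end ProofE
section ProofF
variable {𝔽 : Type} [Field 𝔽] {E : Type} [AddCommGroup E] [Module 𝔽 E]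

/-- generic countable fusion along a `⊆*`-descending chain -/
lemma fusion (b : Module.Basis ℕ 𝔽 E) {base : Submodule 𝔽 E} (hbase : IsBlockSubspace b base)
    (Q : Submodule 𝔽 E → ℕ → Prop)
    (hstep : ∀ S, IsBlockSubspace b S → SubsetStar b S base → ∀ k,
      ∃ S', IsBlockSubspace b S' ∧ SubsetStar b S' S ∧ Q S' k) :
    ∃ Y, IsBlockSubspace b Y ∧ SubsetStar b Y base ∧
      ∀ k, ∃ S', SubsetStar b Y S' ∧ IsBlockSubspace b S' ∧ Q S' k := by
  classical
  choose F h1 h2 h3 using hstep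
  set c : ℕ → {S : Submodule 𝔽 E // IsBlockSubspace b S ∧ SubsetStar b S base} :=
    fun k => Nat.rec ⟨base, hbase, sstar_refl b hbase⟩
      (fun k prev => ⟨F prev.1 prev.2.1 prev.2.2 k,
        h1 prev.1 prev.2.1 prev.2.2 k,
        sstar_trans b (h2 prev.1 prev.2.1 prev.2.2 k) prev.2.2⟩) k with hc
  have hchain : ∀ k, SubsetStar b (c (k + 1)).1 (c k).1 :=
    fun k => h2 (c k).1 (c k).2.1 (c k).2.2 k
  have hQk : ∀ k, Q (c (k + 1)).1 k := fun k => h3 (c k).1 (c k).2.1 (c k).2.2 k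
  obtain ⟨Y, hYb, hYk⟩ := chain_diag b (fun k => (c k).2.1) hchain
  refine ⟨Y, hYb, hYk 0, fun k => ⟨(c (k + 1)).1, hYk (k + 1), (c (k + 1)).2.1, hQk k⟩⟩

/-- `w` is (hereditarily) rejected: II cannot win the Gowers game at `z ++ w` into `U`
below any block subspace `⊆* Winf`. -/
def RejP (b : Module.Basis ℕ 𝔽 E) (Winf : Submodule 𝔽 E) (z : List E) (U : Set (ℕ → E))
    (w : List E) : Prop :=
  ∀ Z, IsBlockSubspace b Z → SubsetStar b Z Winf → ¬IIWinsG b Z (z ++ w) U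

/-- `w` is accepted: II wins the Gowers game at `z ++ w` into `U` below every block
subspace `⊆* Winf`, with moves pushed above any given bound. -/
def AccP (b : Module.Basis ℕ 𝔽 E) (Winf : Submodule 𝔽 E) (z : List E) (U : Set (ℕ → E))
    (w : List E) : Prop :=
  ∀ Z K, IsBlockSubspace b Z → SubsetStar b Z Winf → IIWinsGK b Z (z ++ w) U K

/-- Fusion I: decide every position. -/
lemma decide_all (b : Module.Basis ℕ 𝔽 E) [Countable 𝔽] {V : Submodule 𝔽 E}
    (hV : IsBlockSubspace b V) (z : List E) (U : Set (ℕ → E)) :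
    ∃ Winf, IsBlockSubspace b Winf ∧ SubsetStar b Winf V ∧
      ∀ w, RejP b Winf z U w ∨ AccP b Winf z U w := by
  classical
  haveI : Countable E := countable_of_basis b
  obtain ⟨e, he⟩ := exists_surjective_nat (List E)
  set Q : Submodule 𝔽 E → ℕ → Prop := fun S' k =>
    IIWinsG b S' (z ++ e k) U ∨
      (∀ Z, IsBlockSubspace b Z → SubsetStar b Z S' → ¬IIWinsG b Z (z ++ e k) U) with hQ
  have hstep : ∀ S, IsBlockSubspace b S → SubsetStar b S V → ∀ k,
      ∃ S', IsBlockSubspace b S' ∧ SubsetStar b S' S ∧ Q S' k := by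
    intro S hS _ k
    by_cases h : ∃ Z, IsBlockSubspace b Z ∧ SubsetStar b Z S ∧ IIWinsG b Z (z ++ e k) U
    · obtain ⟨Z, hZ1, hZ2, hZ3⟩ := h
      exact ⟨Z, hZ1, hZ2, Or.inl hZ3⟩
    · push_neg at h
      exact ⟨S, hS, sstar_refl b hS, Or.inr fun Z h1 h2 => h Z h1 h2⟩
  obtain ⟨Winf, hWb, hWV, hWk⟩ := fusion b hV Q hstep
  refine ⟨Winf, hWb, hWV, fun w => ?_⟩
  obtain ⟨k, rfl⟩ := he w
  obtain ⟨S', hWS', hS'b, hQS'⟩ := hWk k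
  rcases hQS' with h | h
  · right
    intro Z K hZ hZW
    exact IIWinsG_transfer b h (sstar_trans b hZW hWS') K
  · left
    intro Z hZ hZW
    exact h Z hZ (sstar_trans b hZW hWS')

/-- The key one-step extension lemma for rejected positions. -/
lemma rej_step (b : Module.Basis ℕ 𝔽 E) {Winf : Submodule 𝔽 E} {z : List E} {U : Set (ℕ → E)}
    {w : List E} (hrej : RejP b Winf z U w)
    (hdec : ∀ v : E, RejP b Winf z U (w ++ [v]) ∨ AccP b Winf z U (w ++ [v]))
    {Z : Submodule 𝔽 E} (hZ : IsBlockSubspace b Z) (hZW : SubsetStar b Z Winf) :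
    ∃ Y', IsBlockSubspace b Y' ∧ Y' ≤ Z ∧
      ∀ v ∈ Y', v ≠ 0 → RejP b Winf z U (w ++ [v]) := by
  by_contra hcon
  push_neg at hcon
  apply hrej Z hZ hZW
  apply IIWinsG_compose b
  intro Y₁ hY₁Z hY₁fd
  obtain ⟨Y₁', hY₁'b, hY₁'le⟩ := exists_block_le_of_deep b (deep_of_not_fd b hY₁fd)
  obtain ⟨v, hvY₁', hv0, hnrej⟩ := hcon Y₁' hY₁'b (le_trans hY₁'le hY₁Z)
  have hacc : AccP b Winf z U (w ++ [v]) := (hdec v).resolve_left hnrej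
  have := hacc Z (MS b v) hZ hZW
  rw [← List.append_assoc] at this
  exact ⟨v, hY₁'le hvY₁', hv0, this⟩

/-- Fusion II: stabilize the one-step rejection witnesses. -/
lemma fusion2 (b : Module.Basis ℕ 𝔽 E) [Countable 𝔽] {Winf : Submodule 𝔽 E} {z : List E}
    {U : Set (ℕ → E)} (hWinf : IsBlockSubspace b Winf)
    (hdec : ∀ w, RejP b Winf z U w ∨ AccP b Winf z U w) :
    ∃ Ws, IsBlockSubspace b Ws ∧ SubsetStar b Ws Winf ∧
      ∀ w, RejP b Winf z U w → ∃ Y', IsBlockSubspace b Y' ∧ SubsetStar b Ws Y' ∧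
        ∀ v ∈ Y', v ≠ 0 → RejP b Winf z U (w ++ [v]) := by
  classical
  haveI : Countable E := countable_of_basis b
  obtain ⟨e, he⟩ := exists_surjective_nat (List E)
  set Q : Submodule 𝔽 E → ℕ → Prop := fun S' k =>
    RejP b Winf z U (e k) → ∀ v ∈ S', v ≠ 0 → RejP b Winf z U (e k ++ [v]) with hQ
  have hstep : ∀ S, IsBlockSubspace b S → SubsetStar b S Winf → ∀ k,
      ∃ S', IsBlockSubspace b S' ∧ SubsetStar b S' S ∧ Q S' k := by
    intro S hS hSW k
    by_cases h : RejP b Winf z U (e k)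
    · obtain ⟨Y', hY'b, hY'le, hY'prop⟩ := rej_step b h (fun v => hdec (e k ++ [v])) hS hSW
      exact ⟨Y', hY'b, sstar_of_le b hY'b hY'le, fun _ => hY'prop⟩
    · exact ⟨S, hS, sstar_refl b hS, fun hr => absurd hr h⟩
  obtain ⟨Ws, hWsb, hWsW, hWsk⟩ := fusion b hWinf Q hstep
  refine ⟨Ws, hWsb, hWsW, fun w hw => ?_⟩
  obtain ⟨k, rfl⟩ := he w
  obtain ⟨S', hWsS', hS'b, hQS'⟩ := hWsk k
  exact ⟨S', hS'b, hWsS', hQS' hw⟩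

/-- Fusion III (one stage): get strategies for player I at all rejected positions. -/
lemma stage_fusion (b : Module.Basis ℕ 𝔽 E) [Countable 𝔽] {Winf S₀ : Submodule 𝔽 E}
    {z : List E} {U : Set (ℕ → E)} (hz : IsFinBlockSeq b z)
    (hS₀ : IsBlockSubspace b S₀) (hS₀W : SubsetStar b S₀ Winf)
    {Aξ : Set (ℕ → E)} (hAξ : StrategicallyRamsey b Aξ) (hsub : Aξ ⊆ U) :
    ∃ X, IsBlockSubspace b X ∧ SubsetStar b X S₀ ∧
      ∀ w, RejP b Winf z U w → IsFinBlockSeq b (z ++ w) →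
        ∃ S', SubsetStar b X S' ∧ IWinsF b S' (z ++ w) Aξᶜ := by
  classical
  haveI : Countable E := countable_of_basis b
  obtain ⟨e, he⟩ := exists_surjective_nat (List E)
  set Q : Submodule 𝔽 E → ℕ → Prop := fun S' k =>
    RejP b Winf z U (e k) → IsFinBlockSeq b (z ++ e k) → IWinsF b S' (z ++ e k) Aξᶜ with hQ
  have hstep : ∀ S, IsBlockSubspace b S → SubsetStar b S S₀ → ∀ k,
      ∃ S', IsBlockSubspace b S' ∧ SubsetStar b S' S ∧ Q S' k := by
    intro S hS hSS₀ k
    by_cases h : RejP b Winf z U (e k) ∧ IsFinBlockSeq b (z ++ e k)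
    · obtain ⟨W', hW'le, hW'b, hor⟩ := hAξ S hS (z ++ e k) h.2
      rcases hor with hII | hI
      · exfalso
        apply h.1 W' hW'b (sstar_trans b (sstar_of_le b hW'b hW'le) (sstar_trans b hSS₀ hS₀W))
        exact IIWinsG_mono hsub hII
      · exact ⟨W', hW'b, sstar_of_le b hW'b hW'le, fun _ _ => hI⟩
    · refine ⟨S, hS, sstar_refl b hS, fun h1 h2 => absurd ⟨h1, h2⟩ h⟩
  obtain ⟨X, hXb, hXS₀, hXk⟩ := fusion b hS₀ Q hstep
  refine ⟨X, hXb, hXS₀, fun w hw hfb => ?_⟩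
  obtain ⟨k, rfl⟩ := he w
  obtain ⟨S', hXS', hS'b, hQS'⟩ := hXk k
  exact ⟨S', hXS', hQS' hw hfb⟩

end ProofF
section ProofG
universe uu vv
variable {𝔽 : Type} [Field 𝔽] {E : Type} [AddCommGroup E] [Module 𝔽 E]

/-- the index type: ordinals below ω₁ -/
abbrev Iot : Type (uu + 1) := {o : Ordinal.{uu} // o < (Cardinal.aleph 1).ord}

lemma aleph1_ord_lift :
    Ordinal.lift.{vv, uu} (Cardinal.aleph 1).ord = (Cardinal.aleph 1).ord := by
  rw [Cardinal.lift_ord]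
  congr 1
  rw [← Cardinal.succ_aleph0, Cardinal.lift_succ, Cardinal.lift_aleph0,
    Cardinal.succ_aleph0]

lemma iot_up : ∃ e : Iot.{uu} → Iot.{max uu vv},
    (∀ a b, a < b ↔ e a < e b) ∧ Function.Bijective e := by
  refine ⟨fun o => ⟨Ordinal.lift.{vv} o.1, ?_⟩, fun a b => ?_, fun a b hab => ?_, fun c => ?_⟩
  · rw [← aleph1_ord_lift.{uu, vv}]
    exact Ordinal.lift_lt.2 o.2
  · constructor
    · intro h
      exact Subtype.mk_lt_mk.2 (Ordinal.lift_lt.2 h)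
    · intro h
      exact Ordinal.lift_lt.1 (Subtype.mk_lt_mk.1 h)
  · apply Subtype.ext
    exact Ordinal.lift_inj.1 (congrArg Subtype.val hab)
  · have hc : c.1 ≤ Ordinal.lift.{vv} (Cardinal.aleph 1).ord := by
      rw [aleph1_ord_lift.{uu, vv}]
      exact le_of_lt c.2
    obtain ⟨a', ha'⟩ := Ordinal.mem_range_lift_of_le hc
    refine ⟨⟨a', ?_⟩, Subtype.ext ha'⟩
    rw [← Ordinal.lift_lt.{vv, uu}, ha', aleph1_ord_lift.{uu, vv}]
    exact c.2

lemma iot_resc : ∃ e : Iot.{uu} → Iot.{vv},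
    (∀ a b, a < b ↔ e a < e b) ∧ Function.Surjective e := by
  obtain ⟨e1, he1, hbij1⟩ := iot_up.{uu, vv}
  obtain ⟨e2, he2, hbij2⟩ := iot_up.{vv, uu}
  have hmax : ∀ x : Iot.{max uu vv}, e2 ((Equiv.ofBijective e2 hbij2).symm x) = x :=
    fun x => (Equiv.ofBijective e2 hbij2).apply_symm_apply x
  refine ⟨fun a => (Equiv.ofBijective e2 hbij2).symm (e1 a), fun a b => ?_, fun c => ?_⟩
  · rw [he1 a b]
    rw [he2 ((Equiv.ofBijective e2 hbij2).symm (e1 a))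
      ((Equiv.ofBijective e2 hbij2).symm (e1 b))]
    rw [hmax, hmax]
  · obtain ⟨a, ha⟩ := hbij1.2 (e2 c)
    refine ⟨a, ?_⟩
    show (Equiv.ofBijective e2 hbij2).symm (e1 a) = c
    rw [ha]
    exact (Equiv.ofBijective e2 hbij2).symm_apply_apply c

lemma countable_preds (ξ : Iot.{uu}) : Countable {η : Iot.{uu} // η < ξ} := by
  have hcard := Ordinal.mk_Iio_ordinal ξ.1
  have h1 : ξ.1.card < Cardinal.aleph 1 := Cardinal.lt_ord.1 ξ.2
  have h2 : ξ.1.card ≤ Cardinal.aleph0 := by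
    have h1x : ξ.1.card < Order.succ Cardinal.aleph0 := by
      rw [Cardinal.succ_aleph0]; exact h1
    exact Order.lt_succ_iff.1 h1x
  have h3 : Cardinal.mk (Set.Iio ξ.1) ≤ Cardinal.aleph0 := by
    rw [hcard, ← Cardinal.lift_aleph0.{uu + 1, uu}]
    exact Cardinal.lift_le.2 h2
  haveI : Countable (Set.Iio ξ.1) := Cardinal.mk_le_aleph0_iff.1 h3
  have hinj : Function.Injective
      (fun η : {η : Iot // η < ξ} => (⟨η.1.1, η.2⟩ : Set.Iio ξ.1)) := by
    intro a b hab
    simp only [Subtype.mk.injEq] at hab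
    exact Subtype.ext (Subtype.ext (Subtype.mk.inj hab))
  exact Function.Injective.countable hinj

lemma iot_wf : WellFounded (fun a b : Iot.{uu} => a < b) :=
  InvImage.wf Subtype.val Ordinal.lt_wf

lemma iot_zero_lt : (0 : Ordinal) < (Cardinal.aleph 1).ord := by
  apply Cardinal.lt_ord.2
  rw [Ordinal.card_zero]
  exact lt_of_lt_of_le Cardinal.aleph0_pos (le_of_lt Cardinal.aleph0_lt_aleph_one)

/-- transfinite layer: a common block subspace below stages for all `ξ < ω₁`. -/
lemma transfinite (b : Module.Basis ℕ 𝔽 E) [Countable 𝔽]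
    {Winf Ws : Submodule 𝔽 E} {z : List E} {U : Set (ℕ → E)}
    (hz : IsFinBlockSeq b z) (hWs : IsBlockSubspace b Ws)
    (hWsW : SubsetStar b Ws Winf)
    (A : Iot.{uu} → Set (ℕ → E)) (hA : ∀ ξ, StrategicallyRamsey b (A ξ))
    (hsub : ∀ ξ, A ξ ⊆ U)
    (H1 : ∀ X : Iot.{uu} → Submodule 𝔽 E,
      (∀ ξ, IsBlockSubspace b (X ξ)) →
      (∀ ξ ζ : Iot.{uu}, ξ < ζ → SubsetStar b (X ζ) (X ξ)) →
      ∃ Y : Submodule 𝔽 E, IsBlockSubspace b Y ∧ ∀ ξ, SubsetStar b Y (X ξ)) :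
    ∃ Y, IsBlockSubspace b Y ∧ SubsetStar b Y Ws ∧
      ∀ ξ : Iot.{uu}, ∀ w, RejP b Winf z U w → IsFinBlockSeq b (z ++ w) →
        ∃ S', SubsetStar b Y S' ∧ IWinsF b S' (z ++ w) (A ξ)ᶜ := by
  classical
  set SP : Iot.{uu} → Submodule 𝔽 E → Prop := fun ξ X =>
    ∀ w, RejP b Winf z U w → IsFinBlockSeq b (z ++ w) →
      ∃ S', SubsetStar b X S' ∧ IWinsF b S' (z ++ w) (A ξ)ᶜ with hSP
  set G : (ξ : Iot.{uu}) → ((η : Iot.{uu}) → η < ξ → Submodule 𝔽 E) → Submodule 𝔽 E :=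
    fun ξ rec =>
      if h : ∃ Y, IsBlockSubspace b Y ∧ SubsetStar b Y Ws ∧
          ∀ η (hη : η < ξ), SubsetStar b Y (rec η hη) then
        (if h2 : ∃ X, IsBlockSubspace b X ∧ SubsetStar b X (Classical.choose h) ∧ SP ξ X
          then Classical.choose h2 else Classical.choose h)
      else Ws with hG
  set T : Iot.{uu} → Submodule 𝔽 E := fun ξ => iot_wf.fix G ξ with hT
  have hTeq : ∀ ξ, T ξ = G ξ (fun η _ => T η) := fun ξ => WellFounded.fix_eq iot_wf G ξ
  have main : ∀ ξ, IsBlockSubspace b (T ξ) ∧ SubsetStar b (T ξ) Ws ∧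
      (∀ η, η < ξ → SubsetStar b (T ξ) (T η)) ∧ SP ξ (T ξ) := by
    intro ξ
    induction ξ using iot_wf.induction with
    | _ ξ IH =>
    have hex : ∃ Y, IsBlockSubspace b Y ∧ SubsetStar b Y Ws ∧
        ∀ η (hη : η < ξ), SubsetStar b Y ((fun η _ => T η) η hη) := by
      by_cases hne : Nonempty {η : Iot.{uu} // η < ξ}
      · haveI := countable_preds ξ
        obtain ⟨q, hq⟩ := exists_surjective_nat {η : Iot.{uu} // η < ξ}
        set m : ℕ → {η : Iot.{uu} // η < ξ} := fun k =>
          Nat.rec (q 0) (fun k prev => if prev.1 < (q (k + 1)).1 then q (k + 1) else prev) k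
          with hm
        have m0 : m 0 = q 0 := rfl
        have msucc : ∀ k, m (k + 1) =
            if (m k).1 < (q (k + 1)).1 then q (k + 1) else m k := fun k => rfl
        have hqm : ∀ k, (q k).1 ≤ (m k).1 := by
          intro k
          cases k with
          | zero => rw [m0]
          | succ k =>
            rw [msucc k]
            by_cases h : (m k).1 < (q (k + 1)).1
            · rw [if_pos h]
            · rw [if_neg h]; exact le_of_not_gt h
        have hmono : ∀ k, (m k).1 ≤ (m (k + 1)).1 := by
          intro k
          rw [msucc k]
          by_cases h : (m k).1 < (q (k + 1)).1
          · rw [if_pos h]; exact le_of_lt h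
          · rw [if_neg h]
        have hCblocks : ∀ k, IsBlockSubspace b (T (m k).1) :=
          fun k => (IH (m k).1 (m k).2).1
        have hCchain : ∀ k, SubsetStar b (T (m (k + 1)).1) (T (m k).1) := by
          intro k
          rcases lt_or_eq_of_le (hmono k) with h | h
          · exact (IH (m (k + 1)).1 (m (k + 1)).2).2.2.1 (m k).1 h
          · rw [← h]; exact sstar_refl b (hCblocks k)
        obtain ⟨Y, hYb, hYk⟩ := chain_diag b hCblocks hCchain
        refine ⟨Y, hYb, sstar_trans b (hYk 0) (IH (m 0).1 (m 0).2).2.1, ?_⟩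
        intro η hη
        obtain ⟨j, hj⟩ := hq ⟨η, hη⟩
        have hqj : (q j).1 = η := by rw [hj]
        have h1 : SubsetStar b (T (m j).1) (T η) := by
          rcases lt_or_eq_of_le (hqm j) with h | h
          · rw [← hqj]; exact (IH (m j).1 (m j).2).2.2.1 (q j).1 h
          · rw [← hqj, h]; exact sstar_refl b (hCblocks j)
        exact sstar_trans b (hYk j) h1
      · refine ⟨Ws, hWs, sstar_refl b hWs, fun η hη => absurd ⟨⟨η, hη⟩⟩ hne⟩
    have hpd : IsBlockSubspace b (Classical.choose hex) ∧
        SubsetStar b (Classical.choose hex) Ws ∧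
        ∀ η (hη : η < ξ), SubsetStar b (Classical.choose hex) (T η) :=
      Classical.choose_spec hex
    have hex2 : ∃ X, IsBlockSubspace b X ∧
        SubsetStar b X (Classical.choose hex) ∧ SP ξ X := by
      obtain ⟨X, hXb, hXpd, hXsp⟩ := stage_fusion b hz hpd.1
        (sstar_trans b hpd.2.1 hWsW) (hA ξ) (hsub ξ)
      exact ⟨X, hXb, hXpd, hXsp⟩
    have hTval : T ξ = Classical.choose hex2 := by
      have heq := hTeq ξ
      rw [hG] at heq
      simp only [] at heq
      rw [dif_pos hex] at heq
      rw [dif_pos hex2] at heq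
      exact heq
    have hX := Classical.choose_spec hex2
    rw [hTval]
    refine ⟨hX.1, sstar_trans b hX.2.1 hpd.2.1, ?_, hX.2.2⟩
    intro η hη
    exact sstar_trans b hX.2.1 (hpd.2.2 η hη)
  obtain ⟨Y, hYb, hYT⟩ := H1 T (fun ξ => (main ξ).1) (fun ξ ζ hlt => (main ζ).2.2.1 ξ hlt)
  set ξ₀ : Iot.{uu} := ⟨0, iot_zero_lt⟩ with hξ₀
  refine ⟨Y, hYb, sstar_trans b (hYT ξ₀) (main ξ₀).2.1, ?_⟩
  intro ξ w hw hfb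
  obtain ⟨S', hS'1, hS'2⟩ := (main ξ).2.2.2 w hw hfb
  exact ⟨S', sstar_trans b (hYT ξ) hS'1, hS'2⟩

end ProofG
section ProofH
variable {𝔽 : Type} [Field 𝔽] {E : Type} [AddCommGroup E] [Module 𝔽 E]

lemma mem_le_foldr_max (l : List ℕ) (a : ℕ) (h : a ∈ l) : a ≤ l.foldr max 0 := by
  induction l with
  | nil => cases h
  | cons x xs ih =>
    rcases List.mem_cons.1 h with rfl | h'
    · exact le_max_left _ _
    · exact le_trans (ih h') (le_max_right _ _)

lemma fb_snoc (b : Module.Basis ℕ 𝔽 E) {l : List E} {v : E} (hl : IsFinBlockSeq b l)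
    (hv : v ≠ 0) (hlast : ∀ u ∈ l, VecLt b u v) : IsFinBlockSeq b (l ++ [v]) := by
  constructor
  · intro x hx
    rcases List.mem_append.1 hx with h | h
    · exact hl.1 x h
    · rw [List.mem_singleton.1 h]; exact hv
  · change List.IsChain _ (l ++ [v]); rw [List.isChain_append]
    refine ⟨hl.2, List.isChain_singleton v, ?_⟩
    intro u hu y hy
    have hyv : y = v := by
      simp only [List.head?] at hy
      exact (Option.mem_some_iff.1 hy).symm
    obtain ⟨hne, hu'⟩ := List.mem_getLast?_eq_getLast hu
    rw [hyv, hu']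
    exact hlast _ (List.getLast_mem hne)

lemma hist_take' {α : Type _} (x : ℕ → α) (k n : ℕ) (h : k ≤ n) :
    (hist x n).take k = hist x k := by
  have e : n = k + (n - k) := by omega
  rw [e, hist_take]

lemma hist_mem {α : Type _} {x : ℕ → α} {i : ℕ} {u : α} (h : u ∈ hist x i) :
    ∃ j, j < i ∧ x j = u := by
  rw [hist, List.mem_ofFn] at h
  obtain ⟨j, hj⟩ := h
  exact ⟨j.1, j.2, hj⟩

lemma main_general {𝔽 : Type} [Field 𝔽] [Countable 𝔽]
    {E : Type} [AddCommGroup E] [Module 𝔽 E]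
    (b : Module.Basis ℕ 𝔽 E)
    (H1 : ∀ X : Iot.{uu} → Submodule 𝔽 E,
      (∀ ξ, IsBlockSubspace b (X ξ)) →
      (∀ ξ ζ : Iot.{uu}, ξ < ζ → SubsetStar b (X ζ) (X ξ)) →
      ∃ Y : Submodule 𝔽 E, IsBlockSubspace b Y ∧ ∀ ξ, SubsetStar b Y (X ξ))
    (H2 : ∀ (D : Type) [Countable D] (f : Iot.{uu} → D → ℕ),
      ∃ g : D → ℕ, ∀ ξ, {d : D | ¬f ξ d ≤ g d}.Finite)
    (A : Iot.{uu} → Set (ℕ → E))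
    (hA : ∀ ξ, StrategicallyRamsey b (A ξ)) :
    StrategicallyRamsey b (⋃ ξ, A ξ) := by
  classical
  intro V hV z hz
  set U : Set (ℕ → E) := ⋃ ξ, A ξ with hU
  have hsub : ∀ ξ, A ξ ⊆ U := fun ξ => Set.subset_iUnion A ξ
  obtain ⟨Winf, hWinfb, hWinfV, hdec⟩ := decide_all b hV z U
  by_cases hcase : RejP b Winf z U []
  case neg =>
    have hacc : AccP b Winf z U [] := (hdec []).resolve_left hcase
    obtain ⟨W, hWb, hWleV, hWleWinf, hWstar⟩ := exists_tail_le b hWinfV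
    have hGK := hacc W 0 hWb hWstar
    rw [List.append_nil] at hGK
    exact ⟨W, hWleV, hWb, Or.inl (IIWinsG_of_GK hGK)⟩
  case pos =>
    obtain ⟨Ws, hWsb, hWsW, hprop2⟩ := fusion2 b hWinfb hdec
    obtain ⟨Y1, hY1b, hY1Ws, hstages⟩ := transfinite b hz hWsb hWsW A hA hsub H1
    have hY1V : SubsetStar b Y1 V := sstar_trans b (sstar_trans b hY1Ws hWsW) hWinfV
    obtain ⟨W, hWb, hWleV, hWleY1, hWY1⟩ := exists_tail_le b hY1V
    have hWWs : SubsetStar b W Ws := sstar_trans b hWY1 hY1Ws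
    have hWWinf : SubsetStar b W Winf := sstar_trans b hWWs hWsW
    refine ⟨W, hWleV, hWb, Or.inr ?_⟩
    -- strategies at rejected positions, transferred to W
    have hstratW : ∀ (ξ : Iot.{uu}) (w : List E), ∃ σ : List E → ℕ,
        RejP b Winf z U w → IsFinBlockSeq b (z ++ w) →
        ∀ x : ℕ → E, (∀ i, x i ∈ W ∧ x i ≠ 0 ∧ NatLt b (σ (hist x i)) (x i) ∧
            VecLt b (x i) (x (i + 1))) →
          (∀ i, σ (hist x i) < σ (hist x (i + 1))) ∧ prefCat (z ++ w) x ∈ (A ξ)ᶜ := by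
      intro ξ w
      by_cases h : RejP b Winf z U w ∧ IsFinBlockSeq b (z ++ w)
      · obtain ⟨S', hS'1, hS'2⟩ := hstages ξ w h.1 h.2
        obtain ⟨σ, hσ⟩ := IWinsF_transfer b hS'2 (sstar_trans b hWY1 hS'1)
        exact ⟨σ, fun _ _ => hσ⟩
      · exact ⟨fun _ => 0, fun h1 h2 => absurd ⟨h1, h2⟩ h⟩
    choose σf hσf using hstratW
    -- rejection-propagation thresholds
    have hthr0 : ∀ w : List E, ∃ t : ℕ, RejP b Winf z U w →
        ∀ v ∈ W, v ≠ 0 → NatLt b t v → RejP b Winf z U (w ++ [v]) := by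
      intro w
      by_cases h : RejP b Winf z U w
      · obtain ⟨Y', hY'b, hWsY', hY'prop⟩ := hprop2 w h
        obtain ⟨t, ht⟩ := mem_of_sstar b (sstar_trans b hWWs hWsY')
        exact ⟨t, fun _ v hvW hv0 hvt => hY'prop v (ht v hvW hvt) hv0⟩
      · exact ⟨0, fun hr => absurd hr h⟩
    choose thr hthr using hthr0
    -- H2 domination
    haveI : Countable E := countable_of_basis b
    set f2 : Iot.{uu} → List E → ℕ := fun ξ l =>
      Finset.sup (Finset.range (l.length + 1)) (fun k => σf ξ (l.take k) (l.drop k))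
      with hf2
    obtain ⟨g, hg⟩ := H2 (List E) f2
    set K : ℕ := (z.map (MS b)).foldr max 0 with hK
    set σI : List E → ℕ := fun l =>
      (K + l.length) + Finset.sup (Finset.range (l.length + 1))
        (fun k => g (l.take k) + thr (l.take k)) with hσI
    have hterm : ∀ l : List E, g l + thr l ≤ Finset.sup (Finset.range (l.length + 1))
        (fun k => g (l.take k) + thr (l.take k)) := by
      intro l
      have h0 := Finset.le_sup (f := fun k => g (l.take k) + thr (l.take k))
        (Finset.self_mem_range_succ l.length)
      calc g l + thr l = g (l.take l.length) + thr (l.take l.length) := by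
            rw [List.take_length]
        _ ≤ _ := h0
    have hσIK : ∀ l, K ≤ σI l := fun l =>
      le_trans (Nat.le_add_right K l.length) (Nat.le_add_right (K + l.length) _)
    have hσIthr : ∀ l, thr l ≤ σI l := fun l =>
      le_trans (le_trans (Nat.le_add_left _ _) (hterm l)) (Nat.le_add_left _ _)
    have hσIg : ∀ l, g l ≤ σI l := fun l =>
      le_trans (le_trans (Nat.le_add_right _ _) (hterm l)) (Nat.le_add_left _ _)
    have hists : ∀ (x : ℕ → E) (i : ℕ), σI (hist x i) < σI (hist x (i + 1)) := by
      intro x i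
      have hsup : Finset.sup (Finset.range (i + 1))
          (fun k => g ((hist x i).take k) + thr ((hist x i).take k)) ≤
          Finset.sup (Finset.range (i + 1 + 1))
          (fun k => g ((hist x (i + 1)).take k) + thr ((hist x (i + 1)).take k)) := by
        apply Finset.sup_le
        intro k hk
        have hk' : k ≤ i := by
          have := Finset.mem_range.1 hk
          omega
        have e1 : (hist x i).take k = (hist x (i + 1)).take k := by
          rw [hist_take' x k i hk', hist_take' x k (i + 1) (by omega)]
        rw [e1]
        exact Finset.le_sup (f := fun k => g ((hist x (i + 1)).take k) +
          thr ((hist x (i + 1)).take k)) (Finset.mem_range.2 (by omega : k < i + 1 + 1))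
      have lhs : σI (hist x i) = K + i + Finset.sup (Finset.range (i + 1))
          (fun k => g ((hist x i).take k) + thr ((hist x i).take k)) := by
        simp only [hσI, hist_length]
      have rhs : σI (hist x (i + 1)) = K + (i + 1) + Finset.sup (Finset.range (i + 1 + 1))
          (fun k => g ((hist x (i + 1)).take k) + thr ((hist x (i + 1)).take k)) := by
        simp only [hσI, hist_length]
      rw [lhs, rhs]
      omega
    refine ⟨σI, ?_⟩
    intro x hx
    have hxblock : IsBlockSeq b x := ⟨fun i => (hx i).2.1, fun i => (hx i).2.2.2⟩
    have hpos : ∀ i, RejP b Winf z U (hist x i) ∧ IsFinBlockSeq b (z ++ hist x i) := by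
      intro i
      induction i with
      | zero =>
        constructor
        · exact hcase
        · rw [hist_zero, List.append_nil]; exact hz
      | succ i ih =>
        obtain ⟨hrej, hfb⟩ := ih
        obtain ⟨hxW, hx0, hxNat, hxVec⟩ := hx i
        have hNthr : NatLt b (thr (hist x i)) (x i) :=
          natLt_mono b (hσIthr (hist x i)) hxNat
        have hrej' : RejP b Winf z U (hist x i ++ [x i]) :=
          hthr (hist x i) hrej (x i) hxW hx0 hNthr
        have hfb' : IsFinBlockSeq b (z ++ hist x (i + 1)) := by
          rw [hist_succ, ← List.append_assoc]
          apply fb_snoc b hfb hx0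
          intro u hu
          rcases List.mem_append.1 hu with huz | huh
          · apply vecLt_of_natLt_MS b
            apply natLt_mono b _ hxNat
            exact le_trans (mem_le_foldr_max _ _ (List.mem_map_of_mem (f := MS b) huz))
              (hσIK (hist x i))
          · obtain ⟨j, hji, hj⟩ := hist_mem huh
            rw [← hj]
            exact blockSeq_lt b hxblock hji
        rw [hist_succ] at hfb' ⊢
        exact ⟨hrej', hfb'⟩
    constructor
    · intro i; exact hists x i
    · rw [Set.mem_compl_iff]
      intro hmem
      obtain ⟨ξ, hξ⟩ := Set.mem_iUnion.1 hmem
      set N : ℕ := (hg ξ).toFinset.sup List.length + 1 with hN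
      have hnotin : ∀ i, N ≤ i → f2 ξ (hist x i) ≤ g (hist x i) := by
        intro i hi
        by_contra hcon
        have hmem' : hist x i ∈ (hg ξ).toFinset := (Set.Finite.mem_toFinset _).2 hcon
        have := Finset.le_sup (f := List.length) hmem'
        rw [hist_length] at this
        omega
      obtain ⟨hrejN, hfbN⟩ := hpos N
      set u : ℕ → E := fun j => x (N + j) with hu
      have hvalid : ∀ j, u j ∈ W ∧ u j ≠ 0 ∧
          NatLt b (σf ξ (hist x N) (hist u j)) (u j) ∧ VecLt b (u j) (u (j + 1)) := by
        intro j
        obtain ⟨h1, h2, h3, h4⟩ := hx (N + j)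
        refine ⟨h1, h2, ?_, ?_⟩
        · apply natLt_mono b _ h3
          have e1 : hist u j = (hist x (N + j)).drop N := (hist_drop x N j).symm
          have e2 : hist x N = (hist x (N + j)).take N := (hist_take x N j).symm
          have hmemN : N ∈ Finset.range ((hist x (N + j)).length + 1) := by
            rw [hist_length]
            exact Finset.mem_range.2 (Nat.lt_succ_of_le (Nat.le_add_right N j))
          calc σf ξ (hist x N) (hist u j)
              = σf ξ ((hist x (N + j)).take N) ((hist x (N + j)).drop N) := by
                rw [← e1, ← e2]
            _ ≤ f2 ξ (hist x (N + j)) :=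
                Finset.le_sup (f := fun k => σf ξ ((hist x (N + j)).take k)
                  ((hist x (N + j)).drop k)) hmemN
            _ ≤ g (hist x (N + j)) := hnotin (N + j) (Nat.le_add_right N j)
            _ ≤ σI (hist x (N + j)) := hσIg _
        · show VecLt b (x (N + j)) (x (N + (j + 1)))
          have e : N + (j + 1) = (N + j) + 1 := by omega
          rw [e]
          exact h4
      have hout := (hσf ξ (hist x N) hrejN hfbN u hvalid).2
      rw [hu] at hout
      rw [prefCat_append_hist] at hout
      exact hout hξ


section ProofH2
universe u1 u2 u3

theorem strategicallyRamsey_iUnion_aleph1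
    {𝔽 : Type} [Field 𝔽] [Countable 𝔽]
    {E : Type} [AddCommGroup E] [Module 𝔽 E]
    (b : Module.Basis ℕ 𝔽 E)
    (H1 : ∀ X : {o : Ordinal // o < (Cardinal.aleph 1).ord} → Submodule 𝔽 E,
      (∀ ξ, IsBlockSubspace b (X ξ)) →
      (∀ ξ ζ : {o : Ordinal // o < (Cardinal.aleph 1).ord}, ξ < ζ → SubsetStar b (X ζ) (X ξ)) →
      ∃ Y : Submodule 𝔽 E, IsBlockSubspace b Y ∧ ∀ ξ, SubsetStar b Y (X ξ))
    (H2 : ∀ (D : Type) [Countable D] (f : {o : Ordinal // o < (Cardinal.aleph 1).ord} → D → ℕ),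
      ∃ g : D → ℕ, ∀ ξ, {d : D | ¬f ξ d ≤ g d}.Finite)
    (A : {o : Ordinal // o < (Cardinal.aleph 1).ord} → Set (ℕ → E))
    (hA : ∀ ξ, StrategicallyRamsey b (A ξ)) :
    StrategicallyRamsey b (⋃ ξ, A ξ) := by
  apply main_general b ?_ ?_ A hA
  · intro X hXb hXdec
    obtain ⟨e, he, hsurj⟩ := iot_resc
    obtain ⟨Y, hYb, hY⟩ := H1 (fun ξ => X (e ξ)) (fun ξ => hXb _)
      (fun ξ ζ hlt => hXdec _ _ ((he ξ ζ).1 hlt))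
    refine ⟨Y, hYb, fun ξ => ?_⟩
    obtain ⟨ξ1, rfl⟩ := hsurj ξ
    exact hY ξ1
  · intro D hD f
    obtain ⟨e, _, hsurj⟩ := iot_resc
    obtain ⟨g, hg⟩ := H2 D (fun ξ d => f (e ξ) d)
    refine ⟨g, fun ξ => ?_⟩
    obtain ⟨ξ2, rfl⟩ := hsurj ξ
    exact hg ξ2

end ProofH2
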